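/- Fix m₂ > 0, ν > m₂ + 1/2, and w ∈ (0,1). Then the map m₁ ↦ ∫₀^w ∫₀^∞ h_{m₁}(u,t) du dt tends, as m₁ → (m₂ + 1/2)⁺, to ∫₀^w ∫₀^∞ h_{m₂+1/2}(u,t) du dt, where for a parameter m₁ > 0 we set h_{m₁}(u,t) = K₀(m₁) · u^{(m₁+m₂)/2−1} · t^{m₁/2−1} · (1−t)^{m₂/2−1} · (1 + m₁ut/ν)^{−(m₁+ν)/2} · (1 + m₂u(1−t)/ν)^{−(m₂+ν)/2} and K₀(m₁) = (m₁/ν)^{m₁/2}(m₂/ν)^{m₂/2} / (B(m₁/2, ν/2) · B(m₂/2, ν/2)). In particular the limit Λ(w) = lim_{m₁→(m₂+1/2)⁺} ∫₀^w ∫₀^∞ h_{m₁}(u,t) du dt exists. -/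
import Mathlib

open Real MeasureTheory Set Filter

set_option maxHeartbeats 2000000

/-- Beta function `B(a,b) = Γ(a)Γ(b)/Γ(a+b)`. -/
noncomputable def Beta (a b : ℝ) : ℝ := Gamma a * Gamma b / Gamma (a + b)

/-- The normalizing constant `K₀(m₁)`, for fixed `m₂` and common denominator
degrees of freedom `ν`. -/
noncomputable def K₀ (m₂ ν : ℝ) (m₁ : ℝ) : ℝ :=
  (m₁ / ν) ^ (m₁ / 2) * (m₂ / ν) ^ (m₂ / 2) /
    (Beta (m₁ / 2) (ν / 2) * Beta (m₂ / 2) (ν / 2))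

/-- The joint density `h_{m₁}(u,t)`. -/
noncomputable def hDens (m₂ ν : ℝ) (m₁ : ℝ) (u t : ℝ) : ℝ :=
  K₀ m₂ ν m₁ * u ^ ((m₁ + m₂) / 2 - 1) * t ^ (m₁ / 2 - 1) * (1 - t) ^ (m₂ / 2 - 1) *
    (1 + m₁ * u * t / ν) ^ (-(m₁ + ν) / 2) *
    (1 + m₂ * u * (1 - t) / ν) ^ (-(m₂ + ν) / 2)

lemma Beta_pos {a b : ℝ} (ha : 0 < a) (hb : 0 < b) : 0 < Beta a b :=
  div_pos (mul_pos (Real.Gamma_pos_of_pos ha) (Real.Gamma_pos_of_pos hb))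
    (Real.Gamma_pos_of_pos (by linarith))

lemma K₀_nonneg {m₂ ν m₁ : ℝ} (hm₂ : 0 < m₂) (hν : 0 < ν) (hm₁ : 0 < m₁) :
    0 ≤ K₀ m₂ ν m₁ := by
  have h1 := Beta_pos (a := m₁ / 2) (b := ν / 2) (by linarith) (by linarith)
  have h2 := Beta_pos (a := m₂ / 2) (b := ν / 2) (by linarith) (by linarith)
  unfold K₀
  positivity

lemma hDens_nonneg {m₂ ν m₁ u t : ℝ} (hm₂ : 0 < m₂) (hν : 0 < ν) (hm₁ : 0 < m₁)
    (hu : 0 ≤ u) (ht : 0 ≤ t) (ht1 : t ≤ 1) : 0 ≤ hDens m₂ ν m₁ u t := by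
  have hK := K₀_nonneg hm₂ hν hm₁
  have h1 : (0:ℝ) ≤ 1 - t := by linarith
  have h2 : (0:ℝ) ≤ 1 + m₁ * u * t / ν := by
    have := div_nonneg (mul_nonneg (mul_nonneg hm₁.le hu) ht) hν.le
    linarith
  have h3 : (0:ℝ) ≤ 1 + m₂ * u * (1 - t) / ν := by
    have := div_nonneg (mul_nonneg (mul_nonneg hm₂.le hu) h1) hν.le
    linarith
  unfold hDens
  exact mul_nonneg (mul_nonneg (mul_nonneg (mul_nonneg (mul_nonneg hK
    (Real.rpow_nonneg hu _)) (Real.rpow_nonneg ht _)) (Real.rpow_nonneg h1 _))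
    (Real.rpow_nonneg h2 _)) (Real.rpow_nonneg h3 _)

lemma gamma_contAt {x : ℝ} (hx : 0 < x) : ContinuousAt Real.Gamma x :=
  (Real.differentiableAt_Gamma fun m =>
    ((lt_of_le_of_lt (neg_nonpos.mpr (Nat.cast_nonneg m)) hx)).ne').continuousAt

lemma K₀_continuousAt {m₂ ν x : ℝ} (hm₂ : 0 < m₂) (hν : 0 < ν) (hx : 0 < x) :
    ContinuousAt (K₀ m₂ ν) x := by
  have hdiv2 : ContinuousAt (fun m₁ : ℝ => m₁ / 2) x := continuousAt_id.div_const 2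
  have hG1 : ContinuousAt (fun m₁ : ℝ => Real.Gamma (m₁ / 2)) x :=
    (gamma_contAt (by positivity)).comp hdiv2
  have hG2 : ContinuousAt (fun m₁ : ℝ => Real.Gamma (m₁ / 2 + ν / 2)) x :=
    (gamma_contAt (by positivity)).comp (hdiv2.add continuousAt_const)
  have hB : ContinuousAt (fun m₁ : ℝ => Beta (m₁ / 2) (ν / 2)) x := by
    unfold Beta
    exact (hG1.mul continuousAt_const).div hG2 (Real.Gamma_pos_of_pos (by positivity)).ne'
  unfold K₀
  apply ContinuousAt.div
  · exact (ContinuousAt.rpow (continuousAt_id.div_const ν) hdiv2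
      (Or.inl (div_pos hx hν).ne')).mul continuousAt_const
  · exact hB.mul continuousAt_const
  · exact (mul_pos (Beta_pos (by positivity) (by positivity))
      (Beta_pos (by positivity) (by positivity))).ne'

lemma rpow_le_add {u a b x : ℝ} (hu : 0 < u) (hax : a ≤ x) (hxb : x ≤ b) :
    u ^ x ≤ u ^ a + u ^ b := by
  rcases le_total u 1 with h | h
  · have h1 := Real.rpow_le_rpow_of_exponent_ge hu h hax
    have h2 := Real.rpow_nonneg hu.le b
    linarith
  · have h1 := Real.rpow_le_rpow_of_exponent_le h hxb
    have h2 := Real.rpow_nonneg hu.le a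
    linarith

lemma int_aux {a p c : ℝ} (ha : -1 < a) (hap : a + 1 < p) (hc : 0 < c) :
    IntegrableOn (fun u : ℝ => u ^ a * (1 + c * u) ^ (-p)) (Ioi 0) := by
  have hp : 0 < p := by linarith
  have hmeas : Measurable fun u : ℝ => u ^ a * (1 + c * u) ^ (-p) := by fun_prop
  rw [← Ioc_union_Ioi_eq_Ioi (zero_le_one (α := ℝ))]
  apply IntegrableOn.union
  · apply Integrable.mono' ((intervalIntegral.intervalIntegrable_rpow' ha).1)
      (hmeas.aestronglyMeasurable.restrict)
    filter_upwards [ae_restrict_mem measurableSet_Ioc] with u hu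
    have hu0 : 0 < u := hu.1
    rw [Real.norm_of_nonneg (by positivity)]
    have h1 : (1 + c * u) ^ (-p) ≤ 1 :=
      Real.rpow_le_one_of_one_le_of_nonpos (by nlinarith) (by linarith)
    nlinarith [Real.rpow_nonneg hu0.le a, Real.rpow_pos_of_pos hu0 a]
  · apply Integrable.mono' (((integrableOn_Ioi_rpow_of_lt (show a - p < -1 by linarith)
      one_pos).const_mul (c ^ (-p))))
      (hmeas.aestronglyMeasurable.restrict)
    filter_upwards [ae_restrict_mem measurableSet_Ioi] with u hu
    have hu1 : (1:ℝ) < u := hu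
    have hu0 : (0:ℝ) < u := by linarith
    rw [Real.norm_of_nonneg (by positivity)]
    have h1 : (1 + c * u) ^ (-p) ≤ (c * u) ^ (-p) :=
      Real.rpow_le_rpow_of_nonpos (by positivity) (by linarith) (by linarith)
    have h2 : (c * u) ^ (-p) = c ^ (-p) * u ^ (-p) := Real.mul_rpow hc.le hu0.le
    have h3 : u ^ a * (c ^ (-p) * u ^ (-p)) = c ^ (-p) * u ^ (a - p) := by
      rw [show a - p = a + (-p) by ring, Real.rpow_add hu0]; ring
    calc u ^ a * (1 + c * u) ^ (-p) ≤ u ^ a * (c * u) ^ (-p) :=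
          mul_le_mul_of_nonneg_left h1 (Real.rpow_nonneg hu0.le a)
      _ = c ^ (-p) * u ^ (a - p) := by rw [h2, h3]

/-- As `m₁ → (m₂ + 1/2)⁺`, the CDF value `∫₀^w ∫₀^∞ h_{m₁}(u,t) du dt` tends to
`∫₀^w ∫₀^∞ h_{m₂+1/2}(u,t) du dt`; in particular the limit `Λ(w)` exists. -/
theorem cdf_tendsto_at_limit_parameter (m₂ ν : ℝ) (hm₂ : 0 < m₂)
    (hν : m₂ + 1 / 2 < ν) (w : ℝ) (hw0 : 0 < w) (hw1 : w < 1) :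
    Tendsto (fun m₁ : ℝ => ∫ t in (0 : ℝ)..w, ∫ u in Ioi (0 : ℝ), hDens m₂ ν m₁ u t)
      (nhdsWithin (m₂ + 1 / 2) (Ioi (m₂ + 1 / 2)))
      (nhds (∫ t in (0 : ℝ)..w, ∫ u in Ioi (0 : ℝ), hDens m₂ ν (m₂ + 1 / 2) u t)) := by
  have hν0 : 0 < ν := by linarith
  set m₀ : ℝ := m₂ + 1 / 2 with hm₀def
  clear_value m₀
  have hm₀0 : 0 < m₀ := by rw [hm₀def]; linarith
  set δ : ℝ := (ν - 1 / 2) / 2 with hδdef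
  clear_value δ
  have hδ : 0 < δ := by rw [hδdef]; linarith
  set a₀ : ℝ := (m₀ + m₂) / 2 - 1 with ha₀def
  set a₁ : ℝ := (m₀ + δ + m₂) / 2 - 1 with ha₁def
  set e₀ : ℝ := m₀ / 2 - 1 with he₀def
  set p : ℝ := (m₂ + ν) / 2 with hpdef
  set c : ℝ := m₂ * (1 - w) / ν with hcdef
  set s : ℝ := (max (a₁ + 1 - p) 0 + (m₂ / 2 + 1 / 4)) / 2 with hsdef
  clear_value a₀ a₁ e₀ p c s
  have hσ : a₁ + 1 - p < m₂ / 2 + 1 / 4 := by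
    rw [ha₁def, hpdef, hδdef, hm₀def]; linarith
  have hmaxσ : max (a₁ + 1 - p) 0 < m₂ / 2 + 1 / 4 := by
    apply max_lt hσ; positivity
  have hmax0 := le_max_right (a₁ + 1 - p) 0
  have hmaxσ₀ := le_max_left (a₁ + 1 - p) 0
  have hs0 : 0 < s := by rw [hsdef]; nlinarith
  have hsUB : s < m₂ / 2 + 1 / 4 := by rw [hsdef]; linarith
  have hsσ : a₁ + 1 - p < s := by rw [hsdef]; linarith
  have hb₁ : a₁ - s + 1 < p := by linarith
  have ha₀₁ : a₀ ≤ a₁ := by rw [ha₀def, ha₁def]; linarith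
  have hb₀a : -1 < a₀ - s := by linarith
  have hb₁a : -1 < a₁ - s := by linarith
  have hb₀ : a₀ - s + 1 < p := by linarith
  have he : -1 < e₀ - s := by linarith
  have hc : 0 < c := by rw [hcdef]; exact div_pos (mul_pos hm₂ (by linarith)) hν0
  have hp0 : 0 < p := by rw [hpdef]; linarith
  set CK : ℝ := K₀ m₂ ν m₀ + 1 with hCKdef
  clear_value CK
  have hCK0 : 0 < CK := by
    have := K₀_nonneg hm₂ hν0 hm₀0
    rw [hCKdef]; linarith
  set C₂ : ℝ := max ((1 - w) ^ (m₂ / 2 - 1)) 1 with hC₂def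
  clear_value C₂
  have hC₂0 : 0 < C₂ := by
    rw [hC₂def]; exact lt_of_lt_of_le one_pos (le_max_right _ _)
  set φ : ℝ → ℝ := fun u => u ^ (a₀ - s) * (1 + c * u) ^ (-p)
      + u ^ (a₁ - s) * (1 + c * u) ^ (-p) with hφdef
  clear_value φ
  have hφint : IntegrableOn φ (Ioi 0) := by
    rw [hφdef]; exact (int_aux hb₀a hb₀ hc).add (int_aux hb₁a hb₁ hc)
  set Iφ : ℝ := ∫ u in Ioi (0:ℝ), φ u with hIφdef
  clear_value Iφ
  set CC : ℝ := CK * C₂ * (m₀ / ν) ^ (-s) with hCCdef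
  clear_value CC
  have hmν : (0:ℝ) < m₀ / ν := by positivity
  have hCC0 : 0 < CC := by
    have h := Real.rpow_pos_of_pos hmν (-s)
    rw [hCCdef]; positivity
  -- the eventual set
  have hev : ∀ᶠ m₁ in nhdsWithin m₀ (Ioi m₀),
      m₁ ∈ Ioo m₀ (m₀ + δ) ∧ K₀ m₂ ν m₁ ≤ CK := by
    have h1 : ∀ᶠ m₁ in nhdsWithin m₀ (Ioi m₀), m₁ ∈ Ioi m₀ := eventually_mem_nhdsWithin
    have h2 : ∀ᶠ m₁ in nhds m₀, m₁ < m₀ + δ := eventually_lt_nhds (by linarith)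
    have h3 : ∀ᶠ m₁ in nhds m₀, K₀ m₂ ν m₁ ≤ CK := by
      have hKc : ContinuousAt (K₀ m₂ ν) m₀ := K₀_continuousAt hm₂ hν0 hm₀0
      exact hKc.eventually (eventually_le_nhds (by rw [hCKdef]; linarith))
    filter_upwards [h1, h2.filter_mono nhdsWithin_le_nhds,
      h3.filter_mono nhdsWithin_le_nhds] with m₁ ha hb hc
    exact ⟨⟨ha, hb⟩, hc⟩
  -- the key domination estimate
  have hdom : ∀ m₁, m₁ ∈ Ioo m₀ (m₀ + δ) → K₀ m₂ ν m₁ ≤ CK → ∀ t ∈ Ioc (0:ℝ) w,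
      ∀ u ∈ Ioi (0:ℝ), hDens m₂ ν m₁ u t ≤ CC * t ^ (e₀ - s) * φ u := by
    intro m₁ hm₁ hK t ht u hu
    have hu0 : (0:ℝ) < u := hu
    have ht0 : 0 < t := ht.1
    have ht1 : t < 1 := lt_of_le_of_lt ht.2 hw1
    have htw : t ≤ w := ht.2
    have hm₁0 : 0 < m₁ := lt_trans hm₀0 hm₁.1
    have h1t : (0:ℝ) < 1 - t := by linarith
    have h1w : (0:ℝ) < 1 - w := by linarith
    have hbase1 : (1:ℝ) ≤ 1 + m₁ * u * t / ν := by
      have := div_nonneg (mul_nonneg (mul_nonneg hm₁0.le hu0.le) ht0.le) hν0.le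
      linarith
    have hcu0 : (0:ℝ) < 1 + c * u := by nlinarith [mul_pos hc hu0]
    have hAa : a₀ ≤ (m₁ + m₂) / 2 - 1 := by
      have := hm₁.1; rw [ha₀def]; linarith
    have hAb : (m₁ + m₂) / 2 - 1 ≤ a₁ := by
      have := hm₁.2; rw [ha₁def]; linarith
    -- factor-wise bounds
    have hBt : t ^ (m₁ / 2 - 1) ≤ t ^ e₀ :=
      Real.rpow_le_rpow_of_exponent_ge ht0 ht1.le
        (by have := hm₁.1; rw [he₀def]; linarith)
    have hC : (1 - t) ^ (m₂ / 2 - 1) ≤ C₂ := by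
      rw [hC₂def]
      rcases le_or_gt 0 (m₂ / 2 - 1) with h | h
      · exact le_trans (Real.rpow_le_one h1t.le (by linarith) h) (le_max_right _ _)
      · exact le_trans (Real.rpow_le_rpow_of_nonpos h1w (by linarith) h.le)
          (le_max_left _ _)
    have hP₁ : (1 + m₁ * u * t / ν) ^ (-(m₁ + ν) / 2)
        ≤ (m₀ / ν) ^ (-s) * (u ^ (-s) * t ^ (-s)) := by
      have hx0 : (0:ℝ) < m₀ / ν * u * t := mul_pos (mul_pos hmν hu0) ht0
      have hxle : m₀ / ν * u * t ≤ 1 + m₁ * u * t / ν := by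
        have h1 : m₀ / ν * u * t ≤ m₁ / ν * u * t := by
          have hd : m₀ / ν ≤ m₁ / ν := (div_le_div_iff_of_pos_right hν0).mpr hm₁.1.le
          exact mul_le_mul_of_nonneg_right (mul_le_mul_of_nonneg_right hd hu0.le) ht0.le
        have h2 : m₁ / ν * u * t = m₁ * u * t / ν := by ring
        linarith
      have hse : -(m₁ + ν) / 2 ≤ -s := by
        have h := hm₁.1
        linarith
      calc (1 + m₁ * u * t / ν) ^ (-(m₁ + ν) / 2)
          ≤ (1 + m₁ * u * t / ν) ^ (-s) :=
            Real.rpow_le_rpow_of_exponent_le hbase1 hse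
        _ ≤ (m₀ / ν * u * t) ^ (-s) :=
            Real.rpow_le_rpow_of_nonpos hx0 hxle (by linarith)
        _ = (m₀ / ν) ^ (-s) * (u ^ (-s) * t ^ (-s)) := by
            rw [Real.mul_rpow (by positivity) ht0.le,
              Real.mul_rpow (by positivity) hu0.le, mul_assoc]
    have hP₂ : (1 + m₂ * u * (1 - t) / ν) ^ (-(m₂ + ν) / 2) ≤ (1 + c * u) ^ (-p) := by
      have hle : 1 + c * u ≤ 1 + m₂ * u * (1 - t) / ν := by
        have h1 : m₂ * u / ν * (1 - w) ≤ m₂ * u / ν * (1 - t) :=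
          mul_le_mul_of_nonneg_left (by linarith) (div_nonneg (mul_nonneg hm₂.le hu0.le) hν0.le)
        have h2 : c * u = m₂ * u / ν * (1 - w) := by rw [hcdef]; ring
        have h3 : m₂ * u * (1 - t) / ν = m₂ * u / ν * (1 - t) := by ring
        linarith
      have hexp : -(m₂ + ν) / 2 = -p := by rw [hpdef]; ring
      rw [hexp]
      exact Real.rpow_le_rpow_of_nonpos hcu0 hle (by linarith)
    -- nonnegativity facts
    have n1 : (0:ℝ) ≤ u ^ ((m₁ + m₂) / 2 - 1) := Real.rpow_nonneg hu0.le _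
    have n2 : (0:ℝ) ≤ t ^ e₀ := Real.rpow_nonneg ht0.le _
    have n2' : (0:ℝ) ≤ t ^ (m₁ / 2 - 1) := Real.rpow_nonneg ht0.le _
    have n3 : (0:ℝ) ≤ (1 - t) ^ (m₂ / 2 - 1) := Real.rpow_nonneg h1t.le _
    have n4 : (0:ℝ) ≤ (m₀ / ν) ^ (-s) * (u ^ (-s) * t ^ (-s)) :=
      mul_nonneg (Real.rpow_nonneg hmν.le _)
        (mul_nonneg (Real.rpow_nonneg hu0.le _) (Real.rpow_nonneg ht0.le _))
    have n5 : (0:ℝ) ≤ (1 + m₁ * u * t / ν) ^ (-(m₁ + ν) / 2) :=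
      Real.rpow_nonneg (by linarith) _
    have n6 : (0:ℝ) ≤ (1 + m₂ * u * (1 - t) / ν) ^ (-(m₂ + ν) / 2) := by
      apply Real.rpow_nonneg
      have := div_nonneg (mul_nonneg (mul_nonneg hm₂.le hu0.le) h1t.le) hν0.le
      linarith
    have n6' : (0:ℝ) ≤ (1 + c * u) ^ (-p) := Real.rpow_nonneg hcu0.le _
    have m1 : (0:ℝ) ≤ CK * u ^ ((m₁ + m₂) / 2 - 1) := mul_nonneg hCK0.le n1
    have m2 : (0:ℝ) ≤ CK * u ^ ((m₁ + m₂) / 2 - 1) * t ^ e₀ := mul_nonneg m1 n2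
    have m3 : (0:ℝ) ≤ CK * u ^ ((m₁ + m₂) / 2 - 1) * t ^ e₀ * C₂ := mul_nonneg m2 hC₂0.le
    have m4 : (0:ℝ) ≤ CK * u ^ ((m₁ + m₂) / 2 - 1) * t ^ e₀ * C₂ *
        ((m₀ / ν) ^ (-s) * (u ^ (-s) * t ^ (-s))) := mul_nonneg m3 n4
    have hKnn := K₀_nonneg hm₂ hν0 hm₁0
    have hT : t ^ e₀ * t ^ (-s) = t ^ (e₀ - s) := by
      rw [← Real.rpow_add ht0]; congr 1 <;> ring
    have hA : u ^ ((m₁ + m₂) / 2 - 1) * u ^ (-s) = u ^ ((m₁ + m₂) / 2 - 1 - s) := by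
      rw [← Real.rpow_add hu0]; congr 1 <;> ring
    have hAs : u ^ ((m₁ + m₂) / 2 - 1 - s) ≤ u ^ (a₀ - s) + u ^ (a₁ - s) :=
      rpow_le_add hu0 (by linarith) (by linarith)
    have hXφ : u ^ ((m₁ + m₂) / 2 - 1 - s) * (1 + c * u) ^ (-p) ≤ φ u := by
      have h := mul_le_mul_of_nonneg_right hAs n6'
      rw [hφdef]
      calc u ^ ((m₁ + m₂) / 2 - 1 - s) * (1 + c * u) ^ (-p)
          ≤ (u ^ (a₀ - s) + u ^ (a₁ - s)) * (1 + c * u) ^ (-p) := h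
        _ = u ^ (a₀ - s) * (1 + c * u) ^ (-p) + u ^ (a₁ - s) * (1 + c * u) ^ (-p) := by
            ring
    show hDens m₂ ν m₁ u t ≤ CC * t ^ (e₀ - s) * φ u
    unfold hDens
    calc K₀ m₂ ν m₁ * u ^ ((m₁ + m₂) / 2 - 1) * t ^ (m₁ / 2 - 1) * (1 - t) ^ (m₂ / 2 - 1) *
          (1 + m₁ * u * t / ν) ^ (-(m₁ + ν) / 2) *
          (1 + m₂ * u * (1 - t) / ν) ^ (-(m₂ + ν) / 2)
        ≤ CK * u ^ ((m₁ + m₂) / 2 - 1) * t ^ e₀ * C₂ *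
            ((m₀ / ν) ^ (-s) * (u ^ (-s) * t ^ (-s))) * (1 + c * u) ^ (-p) := by
          apply mul_le_mul _ hP₂ n6 (mul_nonneg m3 n4)
          apply mul_le_mul _ hP₁ n5 m3
          apply mul_le_mul _ hC n3 m2
          apply mul_le_mul _ hBt n2' m1
          exact mul_le_mul_of_nonneg_right hK n1
      _ = CC * t ^ (e₀ - s) * (u ^ ((m₁ + m₂) / 2 - 1 - s) * (1 + c * u) ^ (-p)) := by
          rw [hCCdef, ← hT, ← hA]; ring
      _ ≤ CC * t ^ (e₀ - s) * φ u :=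
          mul_le_mul_of_nonneg_left hXφ
            (mul_nonneg hCC0.le (Real.rpow_nonneg ht0.le _))
  -- continuity in the parameter
  have hcont : ∀ u ∈ Ioi (0:ℝ), ∀ t ∈ Ioc (0:ℝ) w,
      ContinuousAt (fun m₁ => hDens m₂ ν m₁ u t) m₀ := by
    intro u hu t ht
    have hu0 : (0:ℝ) < u := hu
    have ht0 : 0 < t := ht.1
    have ht1 : t < 1 := lt_of_le_of_lt ht.2 hw1
    have hbase : (0:ℝ) < 1 + m₀ * u * t / ν := by nlinarith [div_pos (mul_pos (mul_pos hm₀0 hu0) ht0) hν0]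
    unfold hDens
    apply ContinuousAt.mul _ continuousAt_const
    apply ContinuousAt.mul
    · apply ContinuousAt.mul _ continuousAt_const
      apply ContinuousAt.mul
      · apply ContinuousAt.mul (K₀_continuousAt hm₂ hν0 hm₀0)
        exact ContinuousAt.rpow continuousAt_const (by fun_prop) (Or.inl hu0.ne')
      · exact ContinuousAt.rpow continuousAt_const (by fun_prop) (Or.inl ht0.ne')
    · exact ContinuousAt.rpow (by fun_prop) (by fun_prop) (Or.inl hbase.ne')
  -- apply dominated convergence for the outer (interval) integral
  apply intervalIntegral.tendsto_integral_filter_of_dominated_convergence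
    (bound := fun t => CC * Iφ * t ^ (e₀ - s))
  · apply Eventually.of_forall
    intro m₁
    have hm : Measurable fun q : ℝ × ℝ => hDens m₂ ν m₁ q.2 q.1 := by
      unfold hDens; fun_prop
    exact (hm.stronglyMeasurable.integral_prod_right').aestronglyMeasurable
  · filter_upwards [hev] with m₁ hm₁ev
    apply ae_of_all
    intro t ht
    rw [Set.uIoc_of_le hw0.le] at ht
    have ht0 : 0 < t := ht.1
    have ht1 : t < 1 := lt_of_le_of_lt ht.2 hw1
    have hm₁0 : 0 < m₁ := lt_trans hm₀0 hm₁ev.1.1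
    have hFnn : 0 ≤ ∫ u in Ioi (0:ℝ), hDens m₂ ν m₁ u t :=
      setIntegral_nonneg measurableSet_Ioi fun u hu =>
        hDens_nonneg hm₂ hν0 hm₁0 (le_of_lt hu) ht0.le ht1.le
    rw [Real.norm_of_nonneg hFnn]
    have hint : Integrable (fun u => CC * t ^ (e₀ - s) * φ u)
        (volume.restrict (Ioi 0)) := hφint.const_mul _
    calc (∫ u in Ioi (0:ℝ), hDens m₂ ν m₁ u t)
        ≤ ∫ u in Ioi (0:ℝ), CC * t ^ (e₀ - s) * φ u := by
          apply integral_mono_of_nonneg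
          · filter_upwards [ae_restrict_mem measurableSet_Ioi] with u hu
            exact hDens_nonneg hm₂ hν0 hm₁0 (le_of_lt hu) ht0.le ht1.le
          · exact hint
          · filter_upwards [ae_restrict_mem measurableSet_Ioi] with u hu
            exact hdom m₁ hm₁ev.1 hm₁ev.2 t ht u hu
      _ = CC * Iφ * t ^ (e₀ - s) := by
          rw [MeasureTheory.integral_const_mul, hIφdef]; ring
  · exact (intervalIntegral.intervalIntegrable_rpow' he).const_mul _
  · apply ae_of_all
    intro t ht
    rw [Set.uIoc_of_le hw0.le] at ht
    have ht0 : 0 < t := ht.1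
    have ht1 : t < 1 := lt_of_le_of_lt ht.2 hw1
    apply MeasureTheory.tendsto_integral_filter_of_dominated_convergence
      (bound := fun u => CC * t ^ (e₀ - s) * φ u)
    · apply Eventually.of_forall
      intro m₁
      have : Measurable fun u => hDens m₂ ν m₁ u t := by unfold hDens; fun_prop
      exact this.aestronglyMeasurable
    · filter_upwards [hev] with m₁ hm
      filter_upwards [ae_restrict_mem measurableSet_Ioi] with u hu
      rw [Real.norm_of_nonneg (hDens_nonneg hm₂ hν0 (lt_trans hm₀0 hm.1.1)
        (le_of_lt hu) ht0.le ht1.le)]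
      exact hdom m₁ hm.1 hm.2 t ht u hu
    · exact hφint.const_mul _
    · filter_upwards [ae_restrict_mem measurableSet_Ioi] with u hu
      exact ((hcont u hu t ht).tendsto).mono_left nhdsWithin_le_nhds
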